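/- In the deterministic saddle point setup below, with constant step-size ε = 1/√T, suppose additionally that F is L_f-Lipschitz and that ‖x‖ ≤ R for all x ∈ X. Then the accumulated constraint violation satisfies Σ_{e=1}^M max(0, Σ_{t=1}^T H_e(x_t)) ≤ √M · ( 2√T (δ + 1) ( (√T/2)(‖x_1 − x*‖² + K) + 2 T L_f R ) )^{1/2}. In particular the time aggregation of the constraint violation grows as O(T^{3/4}). -/

import Mathlib

open scoped RealInnerProductSpace

lemma aux_proj_contract {E : Type*} [NormedAddCommGroup E] [InnerProductSpace ℝ E]
    {X : Set E} (hX : Convex ℝ X) {p y w : E} (hp : p ∈ X) (hw : w ∈ X)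
    (hmin : ∀ z ∈ X, ‖y - p‖ ≤ ‖y - z‖) : ‖p - w‖ ≤ ‖y - w‖ := by
  have hobt : ⟪y - p, w - p⟫ ≤ 0 := by
    by_contra hlt
    push_neg at hlt
    have hwp : w ≠ p := by
      rintro rfl
      simp at hlt
    have hn : 0 < ‖w - p‖ ^ 2 := by
      have h0 : 0 < ‖w - p‖ := norm_pos_iff.mpr (sub_ne_zero.mpr hwp)
      positivity
    set θ : ℝ := min 1 (⟪y - p, w - p⟫ / ‖w - p‖ ^ 2) with hθdef
    have hθ0 : 0 < θ := lt_min one_pos (div_pos hlt hn)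
    have hθ1 : θ ≤ 1 := min_le_left _ _
    have hθc : θ * ‖w - p‖ ^ 2 ≤ ⟪y - p, w - p⟫ := by
      have := min_le_right 1 (⟪y - p, w - p⟫ / ‖w - p‖ ^ 2)
      calc θ * ‖w - p‖ ^ 2 ≤ (⟪y - p, w - p⟫ / ‖w - p‖ ^ 2) * ‖w - p‖ ^ 2 :=
            mul_le_mul_of_nonneg_right this hn.le
        _ = ⟪y - p, w - p⟫ := div_mul_cancel₀ _ hn.ne'
    have hz : p + θ • (w - p) ∈ X := by
      have h := hX hp hw (by linarith : (0:ℝ) ≤ 1 - θ) hθ0.le (by ring)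
      have : (1 - θ) • p + θ • w = p + θ • (w - p) := by
        rw [smul_sub, sub_smul, one_smul]; abel
      rwa [this] at h
    have hle := hmin _ hz
    have hexp : ‖y - (p + θ • (w - p))‖ ^ 2
        = ‖y - p‖ ^ 2 - 2 * θ * ⟪y - p, w - p⟫ + θ ^ 2 * ‖w - p‖ ^ 2 := by
      have h1 : y - (p + θ • (w - p)) = (y - p) - θ • (w - p) := by abel
      rw [h1, norm_sub_sq_real, real_inner_smul_right, norm_smul]
      simp [Real.norm_eq_abs, mul_pow, sq_abs]
      ring
    have hsq := pow_le_pow_left₀ (norm_nonneg _) hle 2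
    rw [hexp] at hsq
    nlinarith
  have h2 : ‖p - w‖ ^ 2 ≤ ‖y - w‖ ^ 2 := by
    have hexp : ‖y - w‖ ^ 2 = ‖y - p‖ ^ 2 - 2 * ⟪y - p, w - p⟫ + ‖w - p‖ ^ 2 := by
      have h1 : y - w = (y - p) - (w - p) := by abel
      rw [h1, norm_sub_sq_real]
    rw [norm_sub_rev p w]
    nlinarith [sq_nonneg ‖y - p‖]
  have := Real.sqrt_le_sqrt h2
  rwa [Real.sqrt_sq (norm_nonneg _), Real.sqrt_sq (norm_nonneg _)] at this

lemma aux_subgrad {E : Type*} [NormedAddCommGroup E] [InnerProductSpace ℝ E] [CompleteSpace E]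
    {g : E → ℝ} (hconv : ConvexOn ℝ Set.univ g) {p G : E} (hg : HasGradientAt g G p)
    (q : E) : ⟪G, q - p⟫ ≤ g q - g p := by
  have hc : HasDerivAt (fun s : ℝ => p + s • (q - p)) (q - p) 0 := by
    simpa using ((hasDerivAt_id (0:ℝ)).smul_const (q - p)).const_add p
  have hd : HasDerivAt (fun s : ℝ => g (p + s • (q - p))) ⟪G, q - p⟫ 0 := by
    have hgf : HasFDerivAt g ((InnerProductSpace.toDual ℝ E) G) (p + (0:ℝ) • (q - p)) := by
      simpa using hg.hasFDerivAt
    have h := hgf.comp_hasDerivAt 0 hc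
    exact h
  have hcomp : ConvexOn ℝ Set.univ (fun s : ℝ => g (p + s • (q - p))) := by
    have h := hconv.comp_affineMap (AffineMap.lineMap p q : ℝ →ᵃ[ℝ] E)
    have heq : (fun s : ℝ => g (p + s • (q - p))) = g ∘ (AffineMap.lineMap p q : ℝ →ᵃ[ℝ] E) := by
      funext s
      simp [AffineMap.lineMap_apply, vsub_eq_sub, vadd_eq_add]
      congr 1
      abel
    rw [heq]
    simpa using h
  have hslope := hcomp.le_slope_of_hasDerivAt (Set.mem_univ (0:ℝ)) (Set.mem_univ 1) one_pos hd
  rw [slope_def_field] at hslope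
  simpa using hslope

lemma aux_convexOn_sum {E : Type*} [AddCommGroup E] [Module ℝ E] {ι : Type*}
    (u : Finset ι) (f : ι → E → ℝ) (h : ∀ i ∈ u, ConvexOn ℝ Set.univ (f i)) :
    ConvexOn ℝ Set.univ (fun y => ∑ i ∈ u, f i y) := by
  classical
  induction u using Finset.induction_on with
  | empty => simpa using convexOn_const (0:ℝ) convex_univ
  | insert _ _ hni ih =>
    simp_rw [Finset.sum_insert hni]
    exact (h _ (Finset.mem_insert_self _ _)).add (ih fun i hi => h i (Finset.mem_insert_of_mem hi))

lemma aux_telescope (f : ℕ → ℝ) (T : ℕ) :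
    ∑ t ∈ Finset.Icc 1 T, (f t - f (t + 1)) = f 1 - f (T + 1) := by
  induction T with
  | zero => simp
  | succ n ih =>
    rw [Finset.sum_Icc_succ_top (by omega : 1 ≤ n + 1), ih]
    ring

lemma aux_inner_eu {M : ℕ} (u v : EuclideanSpace ℝ (Fin M)) :
    ⟪u, v⟫ = ∑ e, u e * v e := by
  simp [PiLp.inner_apply, RCLike.inner_apply, starRingEnd_apply, mul_comm]

set_option maxHeartbeats 1000000 in
lemma aux_step {n M : ℕ}
    (F : EuclideanSpace ℝ (Fin n) → ℝ) (hFconv : ConvexOn ℝ Set.univ F)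
    (hFdiff : Differentiable ℝ F)
    (Hc : Fin M → EuclideanSpace ℝ (Fin n) → ℝ)
    (hHconv : ∀ e, ConvexOn ℝ Set.univ (Hc e)) (hHdiff : ∀ e, Differentiable ℝ (Hc e))
    (ε δ K : ℝ) (hε : 0 < ε) (hδ : 0 < δ)
    (xt xt1 xstar : EuclideanSpace ℝ (Fin n))
    (l l' ls Hv : EuclideanSpace ℝ (Fin M))
    (g : EuclideanSpace ℝ (Fin n)) (gl : EuclideanSpace ℝ (Fin M))
    (hg : g = gradient (fun y => F y + (∑ e, l e * Hc e y) - (δ * ε / 2) * ‖l‖ ^ 2) xt)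
    (hHv : ∀ e, Hv e = Hc e xt)
    (hgl : gl = Hv - (δ * ε) • l)
    (hproj : ‖xt1 - xstar‖ ≤ ‖xt - ε • g - xstar‖)
    (hlrec : ∀ e, l' e = max ((l + ε • gl) e) 0)
    (hl0 : ∀ e, 0 ≤ l e) (hls0 : ∀ e, 0 ≤ ls e)
    (hfeas : ∀ e, Hc e xstar ≤ 0)
    (hbound : ‖g‖^2 + ‖gl‖^2 ≤ K + δ*‖l‖^2) :
    2*ε*(F xt - F xstar + (∑ e, ls e * Hc e xt) - (δ*ε/2)*‖ls‖^2)
      ≤ ((‖xt - xstar‖^2 - ‖xt1 - xstar‖^2) + (‖l - ls‖^2 - ‖l' - ls‖^2)) + ε^2*K := by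
  -- primal descent
  have h1 : ‖xt1 - xstar‖^2
      ≤ ‖xt - xstar‖^2 - 2*ε*⟪g, xt - xstar⟫ + ε^2*‖g‖^2 := by
    have hsq := pow_le_pow_left₀ (norm_nonneg _) hproj 2
    have hexp : ‖xt - ε • g - xstar‖^2
        = ‖xt - xstar‖^2 - 2*ε*⟪g, xt - xstar⟫ + ε^2*‖g‖^2 := by
      have hre : xt - ε • g - xstar = (xt - xstar) - ε • g := by abel
      rw [hre, norm_sub_sq_real, real_inner_smul_right, norm_smul, real_inner_comm]
      simp [Real.norm_eq_abs, mul_pow, sq_abs]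
      ring
    linarith [hexp ▸ hsq]
  -- dual ascent
  have h2 : ‖l' - ls‖^2
      ≤ ‖l - ls‖^2 + 2*ε*⟪gl, l - ls⟫ + ε^2*‖gl‖^2 := by
    have hcomp : ‖l' - ls‖ ≤ ‖(l + ε • gl) - ls‖ := by
      rw [EuclideanSpace.norm_eq, EuclideanSpace.norm_eq]
      apply Real.sqrt_le_sqrt
      apply Finset.sum_le_sum
      intro e _
      simp only [PiLp.sub_apply]
      rw [hlrec e]
      have hl0' := hls0 e
      rw [Real.norm_eq_abs, Real.norm_eq_abs, sq_abs, sq_abs]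
      rcases le_or_gt 0 ((l + ε • gl) e) with hpos | hneg
      · rw [max_eq_left hpos]
      · rw [max_eq_right hneg.le]
        nlinarith
    have hsq := pow_le_pow_left₀ (norm_nonneg _) hcomp 2
    have hexp : ‖(l + ε • gl) - ls‖^2
        = ‖l - ls‖^2 + 2*ε*⟪gl, l - ls⟫ + ε^2*‖gl‖^2 := by
      have hre : (l + ε • gl) - ls = (l - ls) + ε • gl := by abel
      rw [hre, norm_add_sq_real, real_inner_smul_right, norm_smul, real_inner_comm]
      simp [Real.norm_eq_abs, mul_pow, sq_abs]
      ring
    linarith [hexp ▸ hsq]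
  -- convexity (subgradient) inequality in x
  have h3 : (F xt + ∑ e, l e * Hc e xt)
      - (F xstar + ∑ e, l e * Hc e xstar) ≤ ⟪g, xt - xstar⟫ := by
    have hdiff : DifferentiableAt ℝ
        (fun y => F y + (∑ e, l e * Hc e y) - (δ * ε / 2) * ‖l‖ ^ 2) xt := by
      apply DifferentiableAt.sub_const
      exact (hFdiff _).add
        (DifferentiableAt.fun_sum fun e _ => ((hHdiff e) xt).const_mul _)
    have hgrad : HasGradientAt
        (fun y => F y + (∑ e, l e * Hc e y) - (δ * ε / 2) * ‖l‖ ^ 2) g xt := by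
      rw [hg]
      exact hdiff.hasGradientAt
    have hφconv : ConvexOn ℝ Set.univ
        (fun y => F y + (∑ e, l e * Hc e y) - (δ * ε / 2) * ‖l‖ ^ 2) := by
      have hsumc : ConvexOn ℝ Set.univ (fun y => ∑ e, l e * Hc e y) :=
        aux_convexOn_sum Finset.univ (fun e y => l e * Hc e y)
          (fun e _ => (hHconv e).smul (hl0 e))
      exact (hFconv.add hsumc).sub (concaveOn_const _ convex_univ)
    have hsub := aux_subgrad hφconv hgrad xstar
    have hinner : ⟪g, xstar - xt⟫ = -⟪g, xt - xstar⟫ := by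
      rw [show xstar - xt = -(xt - xstar) from by abel, inner_neg_right]
    rw [hinner] at hsub
    linarith [hsub]
  -- feasibility of xstar
  have h5 : ∑ e, l e * Hc e xstar ≤ 0 :=
    Finset.sum_nonpos fun e _ =>
      mul_nonpos_of_nonneg_of_nonpos (hl0 e) (hfeas e)
  -- dual quadratic identity
  have h4 : (∑ e, ls e * Hc e xt) - (δ*ε/2)*‖ls‖^2
      - ((∑ e, l e * Hc e xt) - (δ*ε/2)*‖l‖^2)
      ≤ -⟪gl, l - ls⟫ := by
    have hB : ⟪gl, l - ls⟫
        = (∑ e, l e * Hc e xt) - (∑ e, ls e * Hc e xt)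
          - δ*ε*(‖l‖^2 - ⟪l, ls⟫) := by
      rw [hgl, inner_sub_left, real_inner_smul_left, inner_sub_right,
        inner_sub_right, real_inner_self_eq_norm_sq]
      rw [aux_inner_eu Hv l, aux_inner_eu Hv ls]
      have e1 : ∑ e, Hv e * l e = ∑ e, l e * Hc e xt :=
        Finset.sum_congr rfl fun e _ => by rw [hHv]; ring
      have e2 : ∑ e, Hv e * ls e = ∑ e, ls e * Hc e xt :=
        Finset.sum_congr rfl fun e _ => by rw [hHv]; ring
      rw [e1, e2]
    have hns : ‖l - ls‖^2 = ‖l‖^2 - 2*⟪l, ls⟫ + ‖ls‖^2 :=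
      norm_sub_sq_real _ _
    have h0 : 0 ≤ δ*ε*‖l - ls‖^2 := by positivity
    rw [hns] at h0
    rw [hB]
    nlinarith [h0]
  -- combine everything
  have h3m := mul_le_mul_of_nonneg_left h3 (by positivity : (0:ℝ) ≤ 2*ε)
  have h4m := mul_le_mul_of_nonneg_left h4 (by positivity : (0:ℝ) ≤ 2*ε)
  have h5m := mul_le_mul_of_nonneg_left h5 (by positivity : (0:ℝ) ≤ 2*ε)
  have h6m := mul_le_mul_of_nonneg_left hbound (by positivity : (0:ℝ) ≤ ε^2)
  nlinarith [h1, h2, h3m, h4m, h5m, h6m]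


set_option maxHeartbeats 2000000 in
/-- Part (b) of Theorem 1 of the paper: with constant step-size `ε = 1/√T`, `F`
`L_f`-Lipschitz and `X` bounded by `R`, the accumulated constraint violation satisfies
`∑ₑ [∑_{t=1}^T Hₑ(x_t)]₊ ≤ √M (2√T(δ+1)((√T/2)(‖x₁−x*‖²+K) + 2TL_fR))^{1/2}`,
i.e. it grows as `O(T^{3/4})`. -/
theorem stmt11
    {n M : ℕ} (T : ℕ) (hT : 1 ≤ T)
    (X : Set (EuclideanSpace ℝ (Fin n))) (hXne : X.Nonempty)
    (hXcomp : IsCompact X) (hXconv : Convex ℝ X)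
    (P : EuclideanSpace ℝ (Fin n) → EuclideanSpace ℝ (Fin n))
    (hP : ∀ y, P y ∈ X ∧ ∀ w ∈ X, ‖y - P y‖ ≤ ‖y - w‖)
    (F : EuclideanSpace ℝ (Fin n) → ℝ)
    (hFconv : ConvexOn ℝ Set.univ F) (hFdiff : Differentiable ℝ F)
    (Hc : Fin M → EuclideanSpace ℝ (Fin n) → ℝ)
    (hHconv : ∀ e, ConvexOn ℝ Set.univ (Hc e))
    (hHdiff : ∀ e, Differentiable ℝ (Hc e))
    (Hvec : EuclideanSpace ℝ (Fin n) → EuclideanSpace ℝ (Fin M))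
    (hHvec : ∀ y e, Hvec y e = Hc e y)
    (ε δ : ℝ) (hε : 0 < ε) (hδ : 0 < δ)
    (x : ℕ → EuclideanSpace ℝ (Fin n)) (lam : ℕ → EuclideanSpace ℝ (Fin M))
    (hx1 : x 1 ∈ X) (hlam1 : lam 1 = 0)
    (gx : ℕ → EuclideanSpace ℝ (Fin n))
    (hgx : ∀ t, gx t =
      gradient (fun y => F y + (∑ e, lam t e * Hc e y) - (δ * ε / 2) * ‖lam t‖ ^ 2) (x t))
    (glam : ℕ → EuclideanSpace ℝ (Fin M))
    (hglam : ∀ t, glam t = Hvec (x t) - (δ * ε) • lam t)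
    (hxrec : ∀ t, 1 ≤ t → t ≤ T → x (t + 1) = P (x t - ε • gx t))
    (hlamrec : ∀ t, 1 ≤ t → t ≤ T → ∀ e,
      lam (t + 1) e = max ((lam t + ε • glam t) e) 0)
    (C₁ C₂ : ℝ) (hC₁ : 0 ≤ C₁) (hC₂ : 0 ≤ C₂)
    (hgxb : ∀ t, 1 ≤ t → t ≤ T → ‖gx t‖ ^ 2 ≤ C₁ * (1 + ‖lam t‖ ^ 2))
    (hglamb : ∀ t, 1 ≤ t → t ≤ T → ‖glam t‖ ^ 2 ≤ C₂ + δ ^ 2 * ε ^ 2 * ‖lam t‖ ^ 2)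
    (K : ℝ) (hK : K = C₁ + C₂) (hδK : C₁ + δ ^ 2 * ε ^ 2 ≤ δ)
    (hεT : ε = 1 / Real.sqrt T)
    (xstar : EuclideanSpace ℝ (Fin n)) (hxstarX : xstar ∈ X)
    (hxstarfeas : ∀ e, Hc e xstar ≤ 0)
    (hxstaropt : ∀ y ∈ X, (∀ e, Hc e y ≤ 0) → F xstar ≤ F y)
    (Lf : ℝ) (hLf : ∀ y z, |F y - F z| ≤ Lf * ‖y - z‖)
    (R : ℝ) (hR : ∀ y ∈ X, ‖y‖ ≤ R) :
    ∑ e, max 0 (∑ t ∈ Finset.Icc 1 T, Hc e (x t))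
      ≤ Real.sqrt M *
        Real.sqrt (2 * Real.sqrt T * (δ + 1) *
          ((Real.sqrt T / 2) * (‖x 1 - xstar‖ ^ 2 + K) + 2 * T * Lf * R)) := by
  classical
  have hRHS0 : (0:ℝ) ≤ Real.sqrt M *
      Real.sqrt (2 * Real.sqrt T * (δ + 1) *
        ((Real.sqrt T / 2) * (‖x 1 - xstar‖ ^ 2 + K) + 2 * T * Lf * R)) :=
    mul_nonneg (Real.sqrt_nonneg _) (Real.sqrt_nonneg _)
  rcases lt_or_ge Lf 0 with hLf0 | hLf0
  · -- degenerate case: the space is a singleton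
    have hall : ∀ y z : EuclideanSpace ℝ (Fin n), y = z := by
      intro y z
      by_contra hne
      have h1 : 0 < ‖y - z‖ := norm_pos_iff.mpr (sub_ne_zero.mpr hne)
      have h2 := hLf y z
      nlinarith [abs_nonneg (F y - F z), mul_neg_of_neg_of_pos hLf0 h1]
    have hzero : ∀ e : Fin M, max 0 (∑ t ∈ Finset.Icc 1 T, Hc e (x t)) = 0 := by
      intro e
      have hsum : ∑ t ∈ Finset.Icc 1 T, Hc e (x t) ≤ 0 :=
        Finset.sum_nonpos fun t _ => by rw [hall (x t) xstar]; exact hxstarfeas e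
      exact max_eq_left hsum
    rw [Finset.sum_congr rfl fun e _ => hzero e]
    simpa using hRHS0
  · -- main case : 0 ≤ Lf
    set s : ℝ := Real.sqrt T with hs_def
    have hT1 : (1:ℝ) ≤ (T:ℝ) := by exact_mod_cast hT
    have hs0 : 0 < s := Real.sqrt_pos.mpr (by linarith)
    have hsT : (T:ℝ) = s ^ 2 := (Real.sq_sqrt (by linarith)).symm
    have hR0 : (0:ℝ) ≤ R := (norm_nonneg _).trans (hR _ hxstarX)
    have hδ1 : (0:ℝ) < δ + 1 := by linarith
    -- invariants
    have hxmem : ∀ t, 1 ≤ t → t ≤ T + 1 → x t ∈ X := by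
      intro t
      induction t with
      | zero => intro h; omega
      | succ k ih =>
        intro h1 h2
        by_cases hk : k = 0
        · subst hk; exact hx1
        · rw [hxrec k (Nat.one_le_iff_ne_zero.mpr hk) (by omega)]
          exact (hP _).1
    have hlampos : ∀ t, 1 ≤ t → t ≤ T + 1 → ∀ e, 0 ≤ lam t e := by
      intro t
      induction t with
      | zero => intro h; omega
      | succ k ih =>
        intro h1 h2 e
        by_cases hk : k = 0
        · subst hk; rw [hlam1]; simp
        · rw [hlamrec k (Nat.one_le_iff_ne_zero.mpr hk) (by omega) e]
          exact le_max_right _ _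
    have inner_eu : ∀ u v : EuclideanSpace ℝ (Fin M), ⟪u, v⟫ = ∑ e, u e * v e := by
      intro u v
      simp [PiLp.inner_apply, RCLike.inner_apply, starRingEnd_apply, mul_comm]
    set S : Fin M → ℝ := fun e => ∑ t ∈ Finset.Icc 1 T, Hc e (x t) with hS_def
    set c : ℝ := 1 / (s * (δ + 1)) with hc_def
    have hc0 : 0 ≤ c := by positivity
    set lamS : EuclideanSpace ℝ (Fin M) := WithLp.toLp 2 (fun e => max 0 (S e) * c) with hlamS_def
    have hlamS_app : ∀ e, lamS e = max 0 (S e) * c := fun e => rfl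
    have hlamS0 : ∀ e, 0 ≤ lamS e := fun e => mul_nonneg (le_max_left _ _) hc0
    set Q : ℝ := ∑ e, (max 0 (S e)) ^ 2 with hQ_def
    have hQ0 : 0 ≤ Q := Finset.sum_nonneg fun e _ => sq_nonneg _
    -- per-step inequality
    have step : ∀ t ∈ Finset.Icc 1 T,
        2*ε*(F (x t) - F xstar + (∑ e, lamS e * Hc e (x t)) - (δ*ε/2)*‖lamS‖^2)
          ≤ ((‖x t - xstar‖^2 - ‖x (t+1) - xstar‖^2)
            + (‖lam t - lamS‖^2 - ‖lam (t+1) - lamS‖^2)) + ε^2*K := by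
      intro t ht
      rw [Finset.mem_Icc] at ht
      obtain ⟨ht1, ht2⟩ := ht
      have hlt : ∀ e, 0 ≤ lam t e := hlampos t ht1 (by omega)
      have hproj : ‖x (t+1) - xstar‖ ≤ ‖x t - ε • gx t - xstar‖ := by
        rw [hxrec t ht1 ht2]
        exact aux_proj_contract hXconv (hP _).1 hxstarX (hP _).2
      have hbound : ‖gx t‖^2 + ‖glam t‖^2 ≤ K + δ*‖lam t‖^2 := by
        have hb1 := hgxb t ht1 ht2
        have hb2 := hglamb t ht1 ht2
        rw [hK]
        nlinarith [sq_nonneg ‖lam t‖]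
      exact aux_step F hFconv hFdiff Hc hHconv hHdiff ε δ K hε hδ
        (x t) (x (t+1)) xstar (lam t) (lam (t+1)) lamS (Hvec (x t)) (gx t) (glam t)
        (hgx t) (fun e => hHvec (x t) e) (hglam t) hproj (hlamrec t ht1 ht2)
        hlt hlamS0 hxstarfeas hbound
    have master := Finset.sum_le_sum step
    -- rewrite the RHS sum (telescoping)
    have rhs_eq : ∑ t ∈ Finset.Icc 1 T, (((‖x t - xstar‖^2 - ‖x (t+1) - xstar‖^2)
          + (‖lam t - lamS‖^2 - ‖lam (t+1) - lamS‖^2)) + ε^2*K)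
        = ((‖x 1 - xstar‖^2 - ‖x (T+1) - xstar‖^2)
            + (‖lam 1 - lamS‖^2 - ‖lam (T+1) - lamS‖^2)) + (T:ℝ)*(ε^2*K) := by
      rw [Finset.sum_add_distrib, Finset.sum_add_distrib,
        aux_telescope (fun t => ‖x t - xstar‖^2) T,
        aux_telescope (fun t => ‖lam t - lamS‖^2) T,
        Finset.sum_const, Nat.card_Icc]
      simp [nsmul_eq_mul]
    -- rewrite the LHS sum
    have lhs_eq : ∑ t ∈ Finset.Icc 1 T,
          2*ε*(F (x t) - F xstar + (∑ e, lamS e * Hc e (x t)) - (δ*ε/2)*‖lamS‖^2)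
        = 2*ε*((∑ t ∈ Finset.Icc 1 T, F (x t)) - (T:ℝ)*F xstar
            + (∑ e, lamS e * S e) - (T:ℝ)*((δ*ε/2)*‖lamS‖^2)) := by
      rw [← Finset.mul_sum]
      congr 1
      rw [Finset.sum_sub_distrib, Finset.sum_add_distrib, Finset.sum_sub_distrib,
        Finset.sum_const, Finset.sum_const, Nat.card_Icc]
      have hswap : ∑ t ∈ Finset.Icc 1 T, ∑ e, lamS e * Hc e (x t)
          = ∑ e, lamS e * S e := by
        rw [Finset.sum_comm]
        exact Finset.sum_congr rfl fun e _ => by rw [hS_def, Finset.mul_sum]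
      rw [hswap]
      simp [nsmul_eq_mul]
    rw [lhs_eq, rhs_eq] at master
    -- identities for the chosen multiplier
    have hSQ : ∑ e, lamS e * S e = c * Q := by
      rw [hQ_def, Finset.mul_sum]
      refine Finset.sum_congr rfl fun e _ => ?_
      rw [hlamS_app]
      rcases le_or_gt (S e) 0 with h | h
      · rw [max_eq_left h]; ring
      · rw [max_eq_right h.le]; ring
    have hNQ : ‖lamS‖^2 = c^2 * Q := by
      rw [EuclideanSpace.norm_eq, Real.sq_sqrt (Finset.sum_nonneg fun e _ => sq_nonneg _),
        hQ_def, Finset.mul_sum]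
      refine Finset.sum_congr rfl fun e _ => ?_
      rw [Real.norm_eq_abs, sq_abs, hlamS_app]
      ring
    rw [hSQ, hNQ] at master
    have hlam1n : ‖lam 1 - lamS‖^2 = c^2 * Q := by
      rw [hlam1, zero_sub, norm_neg, hNQ]
    rw [hlam1n] at master
    -- bound the objective terms
    have hFsum : (T:ℝ)*(F xstar) - (∑ t ∈ Finset.Icc 1 T, F (x t)) ≤ (T:ℝ)*(2*Lf*R) := by
      have hbd : ∀ t ∈ Finset.Icc 1 T, F xstar - F (x t) ≤ 2*Lf*R := by
        intro t ht
        rw [Finset.mem_Icc] at ht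
        have hxt := hxmem t ht.1 (by omega)
        have h1 := hLf xstar (x t)
        have h2 : ‖xstar - x t‖ ≤ 2*R := by
          calc ‖xstar - x t‖ ≤ ‖xstar‖ + ‖x t‖ := norm_sub_le _ _
            _ ≤ R + R := add_le_add (hR _ hxstarX) (hR _ hxt)
            _ = 2*R := by ring
        have h3 := le_abs_self (F xstar - F (x t))
        nlinarith [mul_le_mul_of_nonneg_left h2 hLf0]
      calc (T:ℝ)*(F xstar) - (∑ t ∈ Finset.Icc 1 T, F (x t))
          = ∑ t ∈ Finset.Icc 1 T, (F xstar - F (x t)) := by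
            rw [Finset.sum_sub_distrib, Finset.sum_const, Nat.card_Icc]
            simp [nsmul_eq_mul]
        _ ≤ ∑ t ∈ Finset.Icc 1 T, 2*Lf*R := Finset.sum_le_sum hbd
        _ = (T:ℝ)*(2*Lf*R) := by
            rw [Finset.sum_const, Nat.card_Icc]; simp [nsmul_eq_mul]
    -- key scalar inequality
    have hkey : Q / (s^2*(δ+1)) ≤ ‖x 1 - xstar‖^2 + K + 4*s*(Lf*R) := by
      have hFs := mul_le_mul_of_nonneg_left hFsum (by positivity : (0:ℝ) ≤ 2*ε)
      have hnn : (0:ℝ) ≤ ‖x (T+1) - xstar‖^2 := sq_nonneg _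
      have hnn2 : (0:ℝ) ≤ ‖lam (T+1) - lamS‖^2 := sq_nonneg _
      have e1 : 2*ε*(c*Q) - 2*ε*((T:ℝ)*((δ*ε/2)*(c^2*Q))) - c^2*Q = Q/(s^2*(δ+1)) := by
        rw [hεT, hsT, hc_def]
        field_simp
        ring
      have e2 : (T:ℝ)*(ε^2*K) = K := by
        rw [hεT, hsT]
        field_simp
      have e3 : 2*ε*((T:ℝ)*(2*Lf*R)) = 4*s*(Lf*R) := by
        rw [hεT, hsT]
        field_simp
        ring
      nlinarith [master, hFs]
    have hQW : Q ≤ 2 * s * (δ + 1) *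
        ((s / 2) * (‖x 1 - xstar‖ ^ 2 + K) + 2 * (T:ℝ) * Lf * R) := by
      have h1 := (div_le_iff₀ (by positivity : (0:ℝ) < s^2*(δ+1))).mp hkey
      have h2 : (‖x 1 - xstar‖^2 + K + 4*s*(Lf*R)) * (s^2*(δ+1))
          = 2 * s * (δ + 1) * ((s / 2) * (‖x 1 - xstar‖ ^ 2 + K) + 2 * s^2 * Lf * R) := by
        ring
      rw [hsT]
      linarith [h1, h2.le, h2.ge]
    -- conclude via Cauchy-Schwarz
    have hshow : (∑ e, max 0 (∑ t ∈ Finset.Icc 1 T, Hc e (x t))) = ∑ e, max 0 (S e) := rfl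
    rw [hshow]
    have hsum0 : (0:ℝ) ≤ ∑ e, max 0 (S e) :=
      Finset.sum_nonneg fun e _ => le_max_left _ _
    have hW0 : (0:ℝ) ≤ 2 * s * (δ + 1) *
        ((s / 2) * (‖x 1 - xstar‖ ^ 2 + K) + 2 * (T:ℝ) * Lf * R) := le_trans hQ0 hQW
    have hcs : (∑ e, max 0 (S e))^2 ≤ (M:ℝ) * Q := by
      have h := sq_sum_le_card_mul_sum_sq (s := (Finset.univ : Finset (Fin M)))
        (f := fun e => max 0 (S e))
      simpa [hQ_def] using h
    calc ∑ e, max 0 (S e) = Real.sqrt ((∑ e, max 0 (S e))^2) := (Real.sqrt_sq hsum0).symm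
      _ ≤ Real.sqrt ((M:ℝ) * (2 * s * (δ + 1) *
          ((s / 2) * (‖x 1 - xstar‖ ^ 2 + K) + 2 * (T:ℝ) * Lf * R))) := by
          apply Real.sqrt_le_sqrt
          calc (∑ e, max 0 (S e))^2 ≤ (M:ℝ) * Q := hcs
            _ ≤ _ := mul_le_mul_of_nonneg_left hQW (Nat.cast_nonneg M)
      _ = Real.sqrt M * Real.sqrt (2 * s * (δ + 1) *
          ((s / 2) * (‖x 1 - xstar‖ ^ 2 + K) + 2 * (T:ℝ) * Lf * R)) :=
          Real.sqrt_mul (Nat.cast_nonneg M) _
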